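/- Let L ∈ ℝ^{k×n} have rank k ≤ n. Let Z be the set of indices of non-zero columns of L, and define i ∼ j for i, j ∈ Z if the columns L_i and L_j are scalar multiples of each other. If the quotient Z/∼ has exactly k equivalence classes, then there exists a matrix W ∈ ℝ^{k×n} with rowspan(W) = rowspan(L) whose rows have pairwise disjoint supports. -/

import Mathlib

/-- Row space of a matrix: the span of its rows. -/
def rowspan {k n : ℕ} (M : Matrix (Fin k) (Fin n) ℝ) : Submodule ℝ (Fin n → ℝ) :=
  Submodule.span ℝ (Set.range M)

/-- The set of indices of non-zero columns of `L`. -/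
def colNonzero {k n : ℕ} (L : Matrix (Fin k) (Fin n) ℝ) : Set (Fin n) :=
  {i | ∃ r, L r i ≠ 0}

/-- Columns `i` and `j` of `L` are proportional (non-zero scalar multiple). -/
def colRel {k n : ℕ} (L : Matrix (Fin k) (Fin n) ℝ) (i j : Fin n) : Prop :=
  ∃ c : ℝ, c ≠ 0 ∧ ∀ r, L r i = c * L r j

lemma rowspan_mul_le {k m n : ℕ} (A : Matrix (Fin k) (Fin m) ℝ)
    (B : Matrix (Fin m) (Fin n) ℝ) : rowspan (A * B) ≤ rowspan B := by
  rw [rowspan, Submodule.span_le]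
  rintro x ⟨r, rfl⟩
  have : (A * B) r = B.vecMulLinear (A r) := by
    funext j
    simp [Matrix.mul_apply, Matrix.vecMulLinear_apply, Matrix.vecMul, dotProduct]
  rw [this, rowspan]
  show _ ∈ ((Submodule.span ℝ (Set.range B.row) : Submodule ℝ _) : Set (Fin n → ℝ))
  rw [← range_vecMulLinear]
  exact LinearMap.mem_range_self _ _

lemma mulVec_single_one' {m n : ℕ} (M : Matrix (Fin m) (Fin n) ℝ) (t : Fin n) :
    M.mulVec (Pi.single t 1) = fun r => M r t := by
  funext r
  simp [Matrix.mulVec, dotProduct, Pi.single_apply, mul_ite, Finset.sum_ite_eq']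

theorem disjoint_support_basis_of_k_classes {k n : ℕ} (hkn : k ≤ n)
    (L : Matrix (Fin k) (Fin n) ℝ) (hrank : L.rank = k)
    (hclasses : ∃ f : colNonzero L → Fin k, Function.Surjective f ∧
      ∀ i j : colNonzero L, f i = f j ↔ colRel L i.1 j.1) :
    ∃ W : Matrix (Fin k) (Fin n) ℝ,
      rowspan W = rowspan L ∧
      ∀ r r' : Fin k, r ≠ r' → ∀ i, W r i ≠ 0 → W r' i = 0 := by
  obtain ⟨f, hsurj, hiff⟩ := hclasses
  -- representatives
  set j : Fin k → colNonzero L := Function.surjInv hsurj with hj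
  have hfj : ∀ t, f (j t) = t := fun t => Function.surjInv_eq hsurj t
  set C : Matrix (Fin k) (Fin k) ℝ := fun s t => L s (j t).1 with hC
  -- range of L.mulVecLin is top
  have hLtop : LinearMap.range L.mulVecLin = ⊤ := by
    apply Submodule.eq_top_of_finrank_eq
    rw [← Matrix.rank, hrank, Module.finrank_fin_fun]
  -- columns of L lie in span of representative columns
  have hCtop : LinearMap.range C.mulVecLin = ⊤ := by
    rw [Matrix.range_mulVecLin]
    apply top_le_iff.mp
    rw [← hLtop, Matrix.range_mulVecLin, Submodule.span_le]
    rintro x ⟨i, rfl⟩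
    by_cases hi : i ∈ colNonzero L
    · obtain ⟨c, hc0, hcol⟩ : colRel L i (j (f ⟨i, hi⟩)).1 := by
        refine (hiff ⟨i, hi⟩ (j (f ⟨i, hi⟩))).mp ?_
        rw [hfj]
      have : L.transpose i = c • C.transpose (f ⟨i, hi⟩) := by
        funext r
        simp [Matrix.transpose_apply, hcol r, hC]
        left; rfl
      rw [show L.col i = L.transpose i from rfl, this]
      exact Submodule.smul_mem _ _ (Submodule.subset_span ⟨_, rfl⟩)
    · have : L.transpose i = 0 := by
        funext r
        simp only [colNonzero, Set.mem_setOf_eq, not_exists, not_not] at hi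
        exact hi r
      rw [show L.col i = L.transpose i from rfl, this]
      exact Submodule.zero_mem _
  have hCsurj : Function.Surjective C.mulVecLin := LinearMap.range_eq_top.mp hCtop
  have hCbij : Function.Bijective C.mulVecLin :=
    ⟨LinearMap.injective_iff_surjective.mpr hCsurj, hCsurj⟩
  set e : (Fin k → ℝ) ≃ₗ[ℝ] (Fin k → ℝ) := LinearEquiv.ofBijective C.mulVecLin hCbij with he
  set C' : Matrix (Fin k) (Fin k) ℝ := fun r s => e.symm (Pi.single s 1) r with hC'
  have he_apply : ∀ x, e x = C.mulVec x := fun x => rfl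
  have hC'mulVec : ∀ x, C'.mulVec x = e.symm x := by
    intro x
    funext r
    have hps : ∀ s : Fin k, (Pi.single s (1:ℝ) : Fin k → ℝ) = fun u => if s = u then 1 else 0 := by
      intro s; funext u
      rcases eq_or_ne s u with h | h
      · subst h; simp
      · simp [Pi.single_apply, h, h.symm]
    have hx : e.symm x = ∑ s, x s • e.symm (Pi.single s 1) := by
      have := LinearMap.pi_apply_eq_sum_univ (e.symm.toLinearMap) x
      simp only [LinearEquiv.coe_coe, ← hps] at this
      exact this
    rw [hx]
    simp [Matrix.mulVec, dotProduct, hC', Finset.sum_apply, mul_comm]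
  have hCC' : C * C' = 1 := by
    ext r t
    have h1 : (C * C').mulVec (Pi.single t 1) = fun r => (C * C') r t :=
      mulVec_single_one' _ t
    have h2 : (C * C').mulVec (Pi.single t 1) = Pi.single t 1 := by
      rw [← Matrix.mulVec_mulVec, hC'mulVec, ← he_apply, e.apply_symm_apply]
    have := (h1 ▸ h2)
    rw [congrFun this r]
    simp [Matrix.one_apply, Pi.single_apply, eq_comm]
  have hC'C : C' * C = 1 := by
    ext r t
    have h1 : (C' * C).mulVec (Pi.single t 1) = fun r => (C' * C) r t :=
      mulVec_single_one' _ t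
    have h2 : (C' * C).mulVec (Pi.single t 1) = Pi.single t 1 := by
      rw [← Matrix.mulVec_mulVec, ← he_apply, hC'mulVec, e.symm_apply_apply]
    have := (h1 ▸ h2)
    rw [congrFun this r]
    simp [Matrix.one_apply, Pi.single_apply, eq_comm]
  refine ⟨C' * L, ?_, ?_⟩
  · apply le_antisymm (rowspan_mul_le _ _)
    have : L = C * (C' * L) := by rw [← Matrix.mul_assoc, hCC', Matrix.one_mul]
    calc rowspan L = rowspan (C * (C' * L)) := by rw [← this]
    _ ≤ rowspan (C' * L) := rowspan_mul_le _ _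
  · intro r r' hne i hWr
    by_cases hi : i ∈ colNonzero L
    · obtain ⟨c, hc0, hcol⟩ : colRel L i (j (f ⟨i, hi⟩)).1 := by
        refine (hiff ⟨i, hi⟩ (j (f ⟨i, hi⟩))).mp ?_
        rw [hfj]
      set t := f ⟨i, hi⟩ with ht
      have hW : ∀ s, (C' * L) s i = c * (1 : Matrix (Fin k) (Fin k) ℝ) s t := by
        intro s
        have : (C' * L) s i = c * (C' * C) s t := by
          simp only [Matrix.mul_apply]
          rw [Finset.mul_sum]
          congr 1
          funext u
          rw [hcol u]
          simp [hC]; ring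
        rw [this, hC'C]
      have hrt : r = t := by
        by_contra hrt
        apply hWr
        rw [hW r, Matrix.one_apply_ne hrt, mul_zero]
      have hne' : r' ≠ t := fun h => hne (hrt.trans h.symm)
      rw [hW r', Matrix.one_apply_ne hne', mul_zero]
    · exfalso
      apply hWr
      simp only [colNonzero, Set.mem_setOf_eq, not_exists, not_not] at hi
      simp [Matrix.mul_apply, hi]
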